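/- Let w be a strictly positive analytic weight on T₁, ρ = inf{0<r<1 : 1/w is holomorphic in r<|z|<1/r}, and fix r with ρ<r<1. For each N = 0, 1, 2, … there exists a constant C > 0 depending only on r and N such that for all sufficiently large n: |S₁₁(n;z) − Σ_{k=0}^{N} f_n^{(2k)}(z)| ≤ C r^{(2N+2)n}/||z|−1/r| for all |z| ≠ 1/r, and |S₁₂(n;z) − Σ_{k=0}^{N} f_n^{(2k+1)}(z)| ≤ C r^{(2N+3)n}/||z|−r| for all |z| ≠ r. -/

import Mathlib

open MeasureTheory

/-- The Szegő function of a (complex-valued, positive on the unit circle) weight `w`. -/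
noncomputable def szegoD (w : ℂ → ℂ) (z : ℂ) : ℂ :=
  Complex.exp ((4 * (Real.pi : ℂ))⁻¹ * ∫ θ in (0:ℝ)..(2 * Real.pi),
    (Real.log ((w (Complex.exp (θ * Complex.I))).re) : ℂ) *
      ((Complex.exp (θ * Complex.I) + z) / (Complex.exp (θ * Complex.I) - z)))

/-- The Cauchy-type operator `𝓜_n^i` (integration over `|t| = r`). -/
noncomputable def Mi (τ : ℂ) (S : ℂ → ℂ) (r : ℝ) (n : ℕ) (f : ℂ → ℂ) (z : ℂ) : ℂ :=
  -(2 * Real.pi * Complex.I * τ ^ 2)⁻¹ * ∮ t in C(0, r), f t * S t * t ^ n / (t - z)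

/-- The Cauchy-type operator `𝓜_n^e` (integration over `|t| = 1/r`). -/
noncomputable def Me (τ : ℂ) (S : ℂ → ℂ) (r : ℝ) (n : ℕ) (f : ℂ → ℂ) (z : ℂ) : ℂ :=
  τ ^ 2 * (2 * Real.pi * Complex.I)⁻¹ * ∮ t in C(0, 1 / r), f t / (S t * t ^ n * (t - z))

/-- The iterates `f_n^{(j)}`. -/
noncomputable def fIter (τ : ℂ) (S : ℂ → ℂ) (r : ℝ) (n : ℕ) : ℕ → ℂ → ℂ
  | 0 => fun _ => 1
  | j + 1 =>
    if Even j then Mi τ S r n (fIter τ S r n j) else Me τ S r n (fIter τ S r n j)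

lemma fIter_two_mul_add_one (τ : ℂ) (S : ℂ → ℂ) (r : ℝ) (n k : ℕ) :
    fIter τ S r n (2 * k + 1) = Mi τ S r n (fIter τ S r n (2 * k)) := by
  rw [fIter]
  simp [even_two_mul]

lemma fIter_two_mul_add_two (τ : ℂ) (S : ℂ → ℂ) (r : ℝ) (n k : ℕ) :
    fIter τ S r n (2 * k + 2) = Me τ S r n (fIter τ S r n (2 * k + 1)) := by
  rw [show 2 * k + 2 = (2 * k + 1) + 1 from rfl, fIter]
  simp [Nat.even_add_one, even_two_mul]

lemma dist_circle (R : ℝ) (t z : ℂ) (ht : ‖t‖ = R) :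
    |‖z‖ - R| ≤ ‖t - z‖ := by
  have := abs_norm_sub_norm_le t z
  rw [ht] at this
  rwa [abs_sub_comm]

lemma circle_op_bound (R : ℝ) (hR : 0 < R) (g : ℂ → ℂ) (B : ℝ) (hB : 0 ≤ B)
    (hg : ∀ t, ‖t‖ = R → ‖g t‖ ≤ B) (z : ℂ)
    (hz : ‖z‖ ≠ R) :
    ‖∮ t in C(0, R), g t / (t - z)‖ ≤
      2 * Real.pi * R * (B / |‖z‖ - R|) := by
  have hD : 0 < |‖z‖ - R| := abs_pos.mpr (sub_ne_zero.mpr hz)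
  apply circleIntegral.norm_integral_le_of_norm_le_const hR.le
  intro t ht
  have ht' : ‖t‖ = R := by
    simpa using mem_sphere_zero_iff_norm.mp ht
  rw [norm_div]
  exact div_le_div₀ hB (hg t ht') hD (dist_circle R t z ht')

lemma Mi_bound (τ : ℝ) (hτ : 0 < τ) (S : ℂ → ℂ) (r : ℝ) (hr : 0 < r) (n : ℕ)
    (f : ℂ → ℂ) (B : ℝ) (hB : 0 ≤ B)
    (hf : ∀ t, ‖t‖ = r → ‖f t * S t * t ^ n‖ ≤ B)
    (z : ℂ) (hz : ‖z‖ ≠ r) :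
    ‖Mi (τ : ℂ) S r n f z‖ ≤ r * B / (τ ^ 2 * |‖z‖ - r|) := by
  have hD : 0 < |‖z‖ - r| := abs_pos.mpr (sub_ne_zero.mpr hz)
  have h1 := circle_op_bound r hr (fun t => f t * S t * t ^ n) B hB hf z hz
  rw [Mi, norm_mul]
  have h2 : ‖-(2 * Real.pi * Complex.I * (τ : ℂ) ^ 2)⁻¹‖
      = (2 * Real.pi * τ ^ 2)⁻¹ := by
    rw [norm_neg, norm_inv, norm_mul, norm_mul, norm_mul, norm_pow]
    simp [Complex.norm_two, Complex.norm_I, Complex.norm_real,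
      abs_of_pos Real.pi_pos, abs_of_pos hτ]
  rw [h2]
  calc (2 * Real.pi * τ ^ 2)⁻¹ * ‖∮ t in C(0, r),
        f t * S t * t ^ n / (t - z)‖
      ≤ (2 * Real.pi * τ ^ 2)⁻¹ * (2 * Real.pi * r * (B / |‖z‖ - r|)) := by
        apply mul_le_mul_of_nonneg_left h1
        positivity
    _ = r * B / (τ ^ 2 * |‖z‖ - r|) := by
        rw [eq_div_iff (by positivity)]
        field_simp

lemma Me_bound (τ : ℝ) (hτ : 0 < τ) (S : ℂ → ℂ) (r : ℝ) (hr : 0 < r) (n : ℕ)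
    (f : ℂ → ℂ) (B : ℝ) (hB : 0 ≤ B)
    (hf : ∀ t, ‖t‖ = 1 / r → ‖f t / (S t * t ^ n)‖ ≤ B)
    (z : ℂ) (hz : ‖z‖ ≠ 1 / r) :
    ‖Me (τ : ℂ) S r n f z‖ ≤
      τ ^ 2 * B / (r * |‖z‖ - 1 / r|) := by
  have hD : 0 < |‖z‖ - 1 / r| := abs_pos.mpr (sub_ne_zero.mpr hz)
  have hR : 0 < 1 / r := by positivity
  have h1 := circle_op_bound (1 / r) hR (fun t => f t / (S t * t ^ n)) B hB hf z hz
  rw [Me, norm_mul]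
  have hinteq : (∮ t in C(0, 1 / r), f t / (S t * t ^ n * (t - z)))
      = ∮ t in C(0, 1 / r), (f t / (S t * t ^ n)) / (t - z) := by
    apply circleIntegral.integral_congr hR.le
    intro t _
    simp only [div_div]
  rw [hinteq]
  have h2 : ‖(τ : ℂ) ^ 2 * (2 * Real.pi * Complex.I)⁻¹‖
      = τ ^ 2 * (2 * Real.pi)⁻¹ := by
    rw [norm_mul, norm_inv, norm_mul, norm_mul, norm_pow]
    simp [Complex.norm_two, Complex.norm_I, Complex.norm_real,
      abs_of_pos Real.pi_pos, abs_of_pos hτ]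
  rw [h2]
  calc τ ^ 2 * (2 * Real.pi)⁻¹ * ‖∮ t in C(0, 1 / r),
        f t / (S t * t ^ n) / (t - z)‖
      ≤ τ ^ 2 * (2 * Real.pi)⁻¹ *
        (2 * Real.pi * (1 / r) * (B / |‖z‖ - 1 / r|)) := by
        apply mul_le_mul_of_nonneg_left h1
        positivity
    _ = τ ^ 2 * B / (r * |‖z‖ - 1 / r|) := by
        set D := |‖z‖ - 1 / r| with hDdef
        rw [eq_div_iff (by positivity)]
        field_simp

set_option maxHeartbeats 1000000 in
/-- truncation error bounds for the series `S₁₁(n;·)` and `S₁₂(n;·)`: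
for each `N` there is a constant `C` depending only on `r` and `N` with
`|S₁₁(n;z) − Σ_{k=0}^N f_n^{(2k)}(z)| ≤ C r^{(2N+2)n}/||z|−1/r|` and
`|S₁₂(n;z) − Σ_{k=0}^N f_n^{(2k+1)}(z)| ≤ C r^{(2N+3)n}/||z|−r|` for large `n`. -/
theorem stmt_9 (ρ : ℝ) (hρ0 : 0 < ρ) (hρ1 : ρ < 1) (w : ℂ → ℂ)
    (hw_an : AnalyticOn ℂ w {z : ℂ | ρ < ‖z‖ ∧ ‖z‖ < 1 / ρ})
    (hw_ne : ∀ z : ℂ, ρ < ‖z‖ → ‖z‖ < 1 / ρ → w z ≠ 0)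
    (hw_pos : ∀ z : ℂ, ‖z‖ = 1 → (w z).im = 0 ∧ 0 < (w z).re)
    (hρdef : ρ = sInf {s : ℝ | 0 < s ∧ s < 1 ∧
      AnalyticOn ℂ (fun z => (w z)⁻¹) {z : ℂ | s < ‖z‖ ∧ ‖z‖ < 1 / s}})
    (r : ℝ) (hr1 : ρ < r) (hr2 : r < 1)
    (Di De : ℂ → ℂ)
    (hDi_an : AnalyticOn ℂ Di {z : ℂ | ‖z‖ < 1 / ρ})
    (hDi_f : ∀ z : ℂ, ‖z‖ < 1 → Di z = szegoD w z)
    (hDe_an : AnalyticOn ℂ De {z : ℂ | ρ < ‖z‖})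
    (hDe_f : ∀ z : ℂ, 1 < ‖z‖ → De z = szegoD w z)
    (hfact : ∀ z : ℂ, ρ < ‖z‖ → ‖z‖ < 1 / ρ → w z = Di z / De z)
    (τ : ℝ)
    (hτ : τ = Real.exp (-(4 * Real.pi)⁻¹ *
      ∫ θ in (0:ℝ)..(2 * Real.pi), Real.log ((w (Complex.exp (θ * Complex.I))).re)))
    (S : ℂ → ℂ)
    (hS : ∀ z : ℂ, ρ < ‖z‖ → ‖z‖ < 1 / ρ → S z = Di z * De z) :
    ∀ N : ℕ, ∃ C : ℝ, 0 < C ∧ ∃ n₀ : ℕ, ∀ n : ℕ, n₀ ≤ n →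
      (∀ z : ℂ, ‖z‖ ≠ 1 / r →
        ‖(∑' k : ℕ, fIter (τ : ℂ) S r n (2 * k) z) -
            ∑ k ∈ Finset.range (N + 1), fIter (τ : ℂ) S r n (2 * k) z‖ ≤
          C * r ^ ((2 * N + 2) * n) / |‖z‖ - 1 / r|) ∧
      (∀ z : ℂ, ‖z‖ ≠ r →
        ‖(∑' k : ℕ, fIter (τ : ℂ) S r n (2 * k + 1) z) -
            ∑ k ∈ Finset.range (N + 1), fIter (τ : ℂ) S r n (2 * k + 1) z‖ ≤
          C * r ^ ((2 * N + 3) * n) / |‖z‖ - r|) := by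
  intro N
  -- basic positivity facts
  have hr0 : 0 < r := hρ0.trans hr1
  have h1R : 1 < 1 / r := one_lt_one_div hr0 hr2
  have hrR : r < 1 / r := hr2.trans h1R
  have hτ0 : 0 < τ := by rw [hτ]; exact Real.exp_pos _
  have hρinv : 1 < 1 / ρ := one_lt_one_div hρ0 hρ1
  have hrρ : r < 1 / ρ := hr2.trans hρinv
  have hRρ : 1 / r < 1 / ρ := one_div_lt_one_div_of_lt hρ0 hr1
  have hρR : ρ < 1 / r := hρ1.trans h1R
  -- S equals Di * De on the two circles
  have hSr : ∀ t : ℂ, ‖t‖ = r → S t = Di t * De t := fun t ht =>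
    hS t (by rw [ht]; exact hr1) (by rw [ht]; exact hrρ)
  have hSR : ∀ t : ℂ, ‖t‖ = 1 / r → S t = Di t * De t := fun t ht =>
    hS t (by rw [ht]; exact hρR) (by rw [ht]; exact hRρ)
  -- continuity of Di * De on the two circles
  have hcontDD : ∀ R : ℝ, ρ < R → R < 1 / ρ →
      ContinuousOn (fun t => Di t * De t) (Metric.sphere (0 : ℂ) R) := by
    intro R hR1 hR2
    apply ContinuousOn.mul
    · apply (hDi_an.continuousOn).mono
      intro t ht
      have : ‖t‖ = R := by
        simpa using mem_sphere_zero_iff_norm.mp ht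
      simp only [Set.mem_setOf_eq, this]; exact hR2
    · apply (hDe_an.continuousOn).mono
      intro t ht
      have : ‖t‖ = R := by
        simpa using mem_sphere_zero_iff_norm.mp ht
      simp only [Set.mem_setOf_eq, this]; exact hR1
  -- upper bound M1 for |S| on |t| = r
  obtain ⟨C1, hC1⟩ := (isCompact_sphere (0 : ℂ) r).exists_bound_of_continuousOn
    (hcontDD r hr1 hrρ)
  set M1 : ℝ := max C1 0 with hM1def
  have hM1nn : 0 ≤ M1 := le_max_right _ _
  have hSboundr : ∀ t : ℂ, ‖t‖ = r → ‖S t‖ ≤ M1 := by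
    intro t ht
    rw [hSr t ht]
    exact le_trans (hC1 t (by simp [mem_sphere_zero_iff_norm, ht]))
      (le_max_left _ _)
  clear_value M1
  -- nonvanishing of Di, De on the annulus
  have hDiDe_ne : ∀ z : ℂ, ρ < ‖z‖ → ‖z‖ < 1 / ρ →
      Di z * De z ≠ 0 := by
    intro z h1 h2
    have hw := hw_ne z h1 h2
    rw [hfact z h1 h2] at hw
    have hDe : De z ≠ 0 := by
      intro h; exact hw (by rw [h, div_zero])
    have hDi : Di z ≠ 0 := by
      intro h; exact hw (by rw [h, zero_div])
    exact mul_ne_zero hDi hDe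
  -- lower bound m for |S| on |t| = 1/r
  obtain ⟨x₀, hx₀mem, hx₀min⟩ := (isCompact_sphere (0 : ℂ) (1 / r)).exists_isMinOn
    (NormedSpace.sphere_nonempty.mpr (by positivity))
    ((continuous_norm.comp_continuousOn (hcontDD (1 / r) hρR hRρ)))
  have hx₀abs : ‖x₀‖ = 1 / r := by
    simpa using mem_sphere_zero_iff_norm.mp hx₀mem
  set m : ℝ := ‖Di x₀ * De x₀‖ with hmdef
  have hm0 : 0 < m := by
    rw [hmdef]
    exact norm_pos_iff.mpr (hDiDe_ne x₀ (by rw [hx₀abs]; exact hρR)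
      (by rw [hx₀abs]; exact hRρ))
  have hSlowR : ∀ t : ℂ, ‖t‖ = 1 / r → m ≤ ‖S t‖ := by
    intro t ht
    rw [hSR t ht]
    exact hx₀min (by simp [mem_sphere_zero_iff_norm, ht])
  clear_value m
  set M2 : ℝ := 1 / m with hM2def
  have hM2pos : 0 < M2 := by rw [hM2def]; positivity
  clear_value M2
  -- the constants
  set d : ℝ := 1 / r - r with hddef
  have hd : 0 < d := by rw [hddef]; exact sub_pos.mpr hrR
  clear_value d
  set X : ℝ := (M1 * M2 / d ^ 2) ^ (N + 1) with hXdef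
  have hXnn : 0 ≤ X := by rw [hXdef]; positivity
  clear_value X
  refine ⟨2 * (d + (M1 / τ ^ 2) * r) * X + 1, by positivity, ?_⟩
  -- choice of n₀
  obtain ⟨n₀, hn₀⟩ := exists_pow_lt_of_lt_one
    (show (0:ℝ) < d ^ 2 / (2 * (M1 * M2 + 1)) by positivity) hr2
  refine ⟨n₀, ?_⟩
  intro n hn
  set c1 : ℝ := r * M1 / τ ^ 2 with hc1def
  have hc1nn : 0 ≤ c1 := by rw [hc1def]; positivity
  clear_value c1
  set qn : ℝ := M1 * M2 * r ^ (2 * n) / d ^ 2 with hqndef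
  have hqn0 : 0 ≤ qn := by rw [hqndef]; positivity
  clear_value qn
  have hqhalf : qn ≤ 1 / 2 := by
    have h1 : r ^ (2 * n) ≤ r ^ n₀ :=
      pow_le_pow_of_le_one hr0.le hr2.le (by omega)
    have h2 : r ^ n₀ < d ^ 2 / (2 * (M1 * M2 + 1)) := hn₀
    rw [hqndef, div_le_iff₀ (by positivity)]
    have h3 : M1 * M2 * r ^ (2 * n) ≤ (M1 * M2 + 1) * r ^ n₀ := by
      have := mul_le_mul_of_nonneg_left h1 (by positivity : (0:ℝ) ≤ M1 * M2)
      nlinarith [pow_nonneg hr0.le n₀]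
    have h2' : r ^ n₀ * (2 * (M1 * M2 + 1)) < d ^ 2 :=
      (lt_div_iff₀ (by positivity)).mp h2
    have h4 : (M1 * M2 + 1) * r ^ n₀ ≤ d ^ 2 / 2 := by nlinarith [h2']
    linarith
  have hqn1 : qn < 1 := lt_of_le_of_lt hqhalf (by norm_num)
  -- single-step bounds for the operators
  have MiB : ∀ (g : ℂ → ℂ) (F : ℝ), 0 ≤ F →
      (∀ t, ‖t‖ = r → ‖g t‖ ≤ F) →
      ∀ z, ‖z‖ ≠ r →
        ‖Mi (τ : ℂ) S r n g z‖ ≤ c1 * r ^ n * F / |‖z‖ - r| := by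
    intro g F hF hg z hz
    have hD : 0 < |‖z‖ - r| := abs_pos.mpr (sub_ne_zero.mpr hz)
    have hptw : ∀ t, ‖t‖ = r →
        ‖g t * S t * t ^ n‖ ≤ F * M1 * r ^ n := by
      intro t ht
      rw [norm_mul, norm_mul, norm_pow, ht]
      have h1 : ‖g t‖ * ‖S t‖ ≤ F * M1 :=
        mul_le_mul (hg t ht) (hSboundr t ht) (norm_nonneg (S t)) hF
      exact mul_le_mul_of_nonneg_right h1 (by positivity)
    have := Mi_bound τ hτ0 S r hr0 n g (F * M1 * r ^ n) (by positivity) hptw z hz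
    refine this.trans_eq ?_
    rw [hc1def, div_eq_div_iff (by positivity : (0:ℝ) < τ ^ 2 * |‖z‖ - r|).ne' hD.ne']
    field_simp [hr0.ne', hτ0.ne', hD.ne']
  have MeB : ∀ (g : ℂ → ℂ) (F : ℝ), 0 ≤ F →
      (∀ t, ‖t‖ = 1 / r → ‖g t‖ ≤ F) →
      ∀ z, ‖z‖ ≠ 1 / r →
        ‖Me (τ : ℂ) S r n g z‖ ≤
          τ ^ 2 * M2 / r * r ^ n * F / |‖z‖ - 1 / r| := by
    intro g F hF hg z hz
    have hD : 0 < |‖z‖ - 1 / r| := abs_pos.mpr (sub_ne_zero.mpr hz)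
    have hptw : ∀ t, ‖t‖ = 1 / r →
        ‖g t / (S t * t ^ n)‖ ≤ F * M2 * r ^ n := by
      intro t ht
      rw [norm_div, norm_mul, norm_pow, ht]
      have hden : 0 < m * (1 / r) ^ n := by positivity
      have hle : m * (1 / r) ^ n ≤ ‖S t‖ * (1 / r) ^ n :=
        mul_le_mul_of_nonneg_right (hSlowR t ht) (by positivity)
      refine (div_le_div₀ hF (hg t ht) hden hle).trans_eq ?_
      rw [hM2def]
      field_simp [hr0.ne', hm0.ne']
      rw [mul_assoc, ← mul_pow, one_div_mul_cancel hr0.ne', one_pow, mul_one]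
    have := Me_bound τ hτ0 S r hr0 n g (F * M2 * r ^ n) (by positivity) hptw z hz
    refine this.trans_eq ?_
    rw [div_eq_div_iff (mul_ne_zero hr0.ne' hD.ne') hD.ne']
    field_simp [hr0.ne', hτ0.ne', hD.ne']
  -- the key algebraic identity for one double-step
  have heq1 : ∀ k : ℕ, τ ^ 2 * M2 / r * r ^ n * (c1 * r ^ n * qn ^ k / d) =
      d * qn ^ (k + 1) := by
    intro k
    rw [pow_succ, hqndef, hc1def, two_mul, pow_add]
    field_simp [hr0.ne', hτ0.ne', hd.ne', hm0.ne']
    have hd2 : d ^ 2 * d⁻¹ ^ 2 = 1 := by rw [← mul_pow, mul_inv_cancel₀ hd.ne', one_pow]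
    linear_combination (-(M2 * M2 ^ k * r ^ (n * 2) * r ^ (n * k * 2) * M1 * M1 ^ k * d⁻¹ ^ (k * 2))) * hd2
  -- the key inductive estimate
  have key : ∀ k : ℕ,
      (∀ z, ‖z‖ ≠ r →
        ‖fIter (τ : ℂ) S r n (2 * k + 1) z‖ ≤
          c1 * r ^ n * qn ^ k / |‖z‖ - r|) ∧
      (∀ z, ‖z‖ ≠ 1 / r →
        ‖fIter (τ : ℂ) S r n (2 * k + 2) z‖ ≤
          d * qn ^ (k + 1) / |‖z‖ - 1 / r|) := by
    intro k
    induction k with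
    | zero =>
      have hA : ∀ z, ‖z‖ ≠ r →
          ‖fIter (τ : ℂ) S r n (2 * 0 + 1) z‖ ≤
            c1 * r ^ n * qn ^ 0 / |‖z‖ - r| := by
        intro z hz
        rw [fIter_two_mul_add_one]
        have h0 : ∀ t : ℂ, ‖t‖ = r →
            ‖fIter (τ : ℂ) S r n (2 * 0) t‖ ≤ 1 := by
          intro t _
          norm_num [fIter]
        simpa [pow_zero, mul_one] using MiB _ 1 zero_le_one h0 z hz
      refine ⟨hA, ?_⟩
      intro z hz
      rw [fIter_two_mul_add_two]
      have hinner : ∀ t : ℂ, ‖t‖ = 1 / r →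
          ‖fIter (τ : ℂ) S r n (2 * 0 + 1) t‖ ≤ c1 * r ^ n * qn ^ 0 / d := by
        intro t ht
        have ht' : ‖t‖ ≠ r := by rw [ht]; exact hrR.ne'
        have := hA t ht'
        rwa [ht, show |1 / r - r| = d from by rw [← hddef]; exact abs_of_pos hd] at this
      have hMe := MeB _ (c1 * r ^ n * qn ^ 0 / d) (by positivity) hinner z hz
      refine hMe.trans_eq ?_
      rw [heq1 0]
    | succ k ih =>
      have hA : ∀ z, ‖z‖ ≠ r →
          ‖fIter (τ : ℂ) S r n (2 * (k + 1) + 1) z‖ ≤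
            c1 * r ^ n * qn ^ (k + 1) / |‖z‖ - r| := by
        intro z hz
        rw [fIter_two_mul_add_one]
        have hinner : ∀ t : ℂ, ‖t‖ = r →
            ‖fIter (τ : ℂ) S r n (2 * (k + 1)) t‖ ≤ qn ^ (k + 1) := by
          intro t ht
          have ht' : ‖t‖ ≠ 1 / r := by rw [ht]; exact hrR.ne
          have h2 := ih.2 t ht'
          rw [show 2 * k + 2 = 2 * (k + 1) from by ring] at h2
          rw [ht, show |r - 1 / r| = d from by
            rw [abs_sub_comm, ← hddef]; exact abs_of_pos hd] at h2
          calc ‖fIter (τ : ℂ) S r n (2 * (k + 1)) t‖ ≤ d * qn ^ (k + 1) / d := h2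
            _ = qn ^ (k + 1) := by field_simp [hd.ne']
        exact MiB _ (qn ^ (k + 1)) (by positivity) hinner z hz
      refine ⟨hA, ?_⟩
      intro z hz
      rw [fIter_two_mul_add_two]
      have hinner : ∀ t : ℂ, ‖t‖ = 1 / r →
          ‖fIter (τ : ℂ) S r n (2 * (k + 1) + 1) t‖ ≤
            c1 * r ^ n * qn ^ (k + 1) / d := by
        intro t ht
        have ht' : ‖t‖ ≠ r := by rw [ht]; exact hrR.ne'
        have := hA t ht'
        rwa [ht, show |1 / r - r| = d from by rw [← hddef]; exact abs_of_pos hd] at this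
      have hMe := MeB _ (c1 * r ^ n * qn ^ (k + 1) / d) (by positivity) hinner z hz
      refine hMe.trans_eq ?_
      rw [heq1 (k + 1)]
  -- the geometric tail estimate
  have hgeom : Summable (fun i : ℕ => qn ^ i) := summable_geometric_of_lt_one hqn0 hqn1
  have hinv2 : (1 - qn)⁻¹ ≤ 2 := by
    have h1 : (0:ℝ) < 1 - qn := by linarith
    have h2 : (2:ℝ)⁻¹ ≤ 1 - qn := by norm_num; linarith
    calc (1 - qn)⁻¹ ≤ ((2:ℝ)⁻¹)⁻¹ := by
          apply inv_anti₀ (by norm_num) h2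
      _ = 2 := by norm_num
  have hXpow : qn ^ (N + 1) = X * r ^ ((2 * N + 2) * n) := by
    rw [hXdef, hqndef]
    rw [show M1 * M2 * r ^ (2 * n) / d ^ 2 = M1 * M2 / d ^ 2 * r ^ (2 * n) from by ring,
      mul_pow, ← pow_mul, show 2 * n * (N + 1) = (2 * N + 2) * n from by ring]
  constructor
  -- first series
  · intro z hz
    have hD : 0 < |‖z‖ - 1 / r| := abs_pos.mpr (sub_ne_zero.mpr hz)
    set g : ℕ → ℂ := fun k => fIter (τ : ℂ) S r n (2 * k) z with hgdef
    have hgbound : ∀ k : ℕ, ‖g (k + 1)‖ ≤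
        d / |‖z‖ - 1 / r| * qn ^ (k + 1) := by
      intro k
      have := (key k).2 z hz
      rw [show 2 * k + 2 = 2 * (k + 1) from by ring] at this
      rw [hgdef]
      refine this.trans_eq ?_
      ring
    have hsum : Summable g := by
      apply Summable.of_norm_bounded (g :=
        fun k => max 1 (d / |‖z‖ - 1 / r|) * qn ^ k) (hgeom.mul_left _)
      intro k
      match k with
      | 0 => simp [hgdef, fIter, le_max_left]
      | k + 1 =>
        exact (hgbound k).trans (mul_le_mul_of_nonneg_right (le_max_right _ _)
          (by positivity))
    have htail : (∑' k, g k) - ∑ k ∈ Finset.range (N + 1), g k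
        = ∑' i, g (i + (N + 1)) := by
      rw [← Summable.sum_add_tsum_nat_add (N + 1) hsum]
      ring
    have hterm : ∀ i : ℕ, ‖g (i + (N + 1))‖ ≤
        d * qn ^ (N + 1) / |‖z‖ - 1 / r| * qn ^ i := by
      intro i
      refine (hgbound (i + N)).trans_eq ?_
      rw [show i + N + 1 = (N + 1) + i from by ring, pow_add]
      ring
    have hnormsum : Summable (fun i => ‖g (i + (N + 1))‖) :=
      Summable.of_nonneg_of_le (fun i => norm_nonneg _) hterm (hgeom.mul_left _)
    calc ‖(∑' k, g k) - ∑ k ∈ Finset.range (N + 1), g k‖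
        = ‖∑' i, g (i + (N + 1))‖ := by rw [htail]
      _ ≤ ∑' i, ‖g (i + (N + 1))‖ := norm_tsum_le_tsum_norm hnormsum
      _ ≤ ∑' i, d * qn ^ (N + 1) / |‖z‖ - 1 / r| * qn ^ i :=
          Summable.tsum_le_tsum hterm hnormsum (hgeom.mul_left _)
      _ = d * qn ^ (N + 1) / |‖z‖ - 1 / r| * (1 - qn)⁻¹ := by
          rw [tsum_mul_left, tsum_geometric_of_lt_one hqn0 hqn1]
      _ ≤ d * qn ^ (N + 1) / |‖z‖ - 1 / r| * 2 :=
          mul_le_mul_of_nonneg_left hinv2 (by positivity)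
      _ ≤ (2 * (d + M1 / τ ^ 2 * r) * X + 1) * r ^ ((2 * N + 2) * n) /
            |‖z‖ - 1 / r| := by
          rw [hXpow, div_mul_eq_mul_div, div_le_div_iff₀ hD hD]
          apply mul_le_mul_of_nonneg_right _ hD.le
          have hkey : 2 * (d * X) ≤ 2 * (d + M1 / τ ^ 2 * r) * X + 1 := by
            have h2 : M1 / τ ^ 2 * r = c1 := by rw [hc1def]; ring
            have h1 : (0:ℝ) ≤ c1 * X := mul_nonneg hc1nn hXnn
            rw [h2]
            nlinarith [h1]
          calc d * (X * r ^ ((2 * N + 2) * n)) * 2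
              = 2 * (d * X) * r ^ ((2 * N + 2) * n) := by ring
            _ ≤ (2 * (d + M1 / τ ^ 2 * r) * X + 1) * r ^ ((2 * N + 2) * n) :=
                mul_le_mul_of_nonneg_right hkey (by positivity)
  -- second series
  · intro z hz
    have hD : 0 < |‖z‖ - r| := abs_pos.mpr (sub_ne_zero.mpr hz)
    set g : ℕ → ℂ := fun k => fIter (τ : ℂ) S r n (2 * k + 1) z with hgdef
    have hgbound : ∀ k : ℕ, ‖g k‖ ≤
        c1 * r ^ n / |‖z‖ - r| * qn ^ k := by
      intro k
      have := (key k).1 z hz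
      rw [hgdef]
      refine this.trans_eq ?_
      ring
    have hsum : Summable g :=
      Summable.of_norm_bounded (hgeom.mul_left _) hgbound
    have htail : (∑' k, g k) - ∑ k ∈ Finset.range (N + 1), g k
        = ∑' i, g (i + (N + 1)) := by
      rw [← Summable.sum_add_tsum_nat_add (N + 1) hsum]
      ring
    have hterm : ∀ i : ℕ, ‖g (i + (N + 1))‖ ≤
        c1 * r ^ n * qn ^ (N + 1) / |‖z‖ - r| * qn ^ i := by
      intro i
      refine (hgbound (i + (N + 1))).trans_eq ?_
      rw [show i + (N + 1) = (N + 1) + i from by ring, pow_add]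
      ring
    have hnormsum : Summable (fun i => ‖g (i + (N + 1))‖) :=
      Summable.of_nonneg_of_le (fun i => norm_nonneg _) hterm (hgeom.mul_left _)
    calc ‖(∑' k, g k) - ∑ k ∈ Finset.range (N + 1), g k‖
        = ‖∑' i, g (i + (N + 1))‖ := by rw [htail]
      _ ≤ ∑' i, ‖g (i + (N + 1))‖ := norm_tsum_le_tsum_norm hnormsum
      _ ≤ ∑' i, c1 * r ^ n * qn ^ (N + 1) / |‖z‖ - r| * qn ^ i :=
          Summable.tsum_le_tsum hterm hnormsum (hgeom.mul_left _)
      _ = c1 * r ^ n * qn ^ (N + 1) / |‖z‖ - r| * (1 - qn)⁻¹ := by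
          rw [tsum_mul_left, tsum_geometric_of_lt_one hqn0 hqn1]
      _ ≤ c1 * r ^ n * qn ^ (N + 1) / |‖z‖ - r| * 2 :=
          mul_le_mul_of_nonneg_left hinv2 (by positivity)
      _ ≤ (2 * (d + M1 / τ ^ 2 * r) * X + 1) * r ^ ((2 * N + 3) * n) /
            |‖z‖ - r| := by
          rw [hXpow, div_mul_eq_mul_div, div_le_div_iff₀ hD hD]
          apply mul_le_mul_of_nonneg_right _ hD.le
          have hrpow : r ^ n * r ^ ((2 * N + 2) * n) = r ^ ((2 * N + 3) * n) := by
            rw [← pow_add, show n + (2 * N + 2) * n = (2 * N + 3) * n from by ring]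
          have hkey : 2 * (c1 * X) ≤ 2 * (d + M1 / τ ^ 2 * r) * X + 1 := by
            have h1 : (0:ℝ) ≤ d * X := mul_nonneg hd.le hXnn
            have h2 : M1 / τ ^ 2 * r = c1 := by rw [hc1def]; ring
            rw [h2]
            nlinarith [h1]
          calc c1 * r ^ n * (X * r ^ ((2 * N + 2) * n)) * 2
              = 2 * (c1 * X) * (r ^ n * r ^ ((2 * N + 2) * n)) := by ring
            _ = 2 * (c1 * X) * r ^ ((2 * N + 3) * n) := by rw [hrpow]
            _ ≤ (2 * (d + M1 / τ ^ 2 * r) * X + 1) * r ^ ((2 * N + 3) * n) :=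
                mul_le_mul_of_nonneg_right hkey (by positivity)
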